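/- arXiv:2001.00763 — 4 statements merged into one kernel-verified Lean document; each statement's English description precedes it below -/
import Mathlib

section
/- Let G be a graph on n ≥ 3 vertices and for each vertex v of G let G_v denote the induced subgraph of G on the remaining n−1 vertices. Then ν*(G) ≥ (1/(n−2))·Σ_v ν*(G_v). Equivalently, with η(H) := ν*(H)/(|H|·(|H|−1)), one has η(G) ≥ (1/n)·Σ_v η(G_v). -/
open Finset
open scoped Classical

variable {V : Type*}

/-- A triangle packing of `G`: a finite collection of triangles (3-cliques) of `G` that are
pairwise edge-disjoint (i.e. any two distinct members share at most one vertex). -/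
def SimpleGraph.IsTrianglePacking [DecidableEq V] (G : SimpleGraph V)
    (P : Finset (Finset V)) : Prop :=
  (∀ T ∈ P, G.IsNClique 3 T) ∧
    (P : Set (Finset V)).Pairwise fun S T => (S ∩ T).card ≤ 1

/-- The maximum size (number of edges, i.e. `3 * number of triangles`) of a triangle packing. -/
noncomputable def SimpleGraph.triangleNu [DecidableEq V] (G : SimpleGraph V) : ℕ :=
  sSup {m | ∃ P : Finset (Finset V), G.IsTrianglePacking P ∧ m = 3 * P.card}

/-- A fractional triangle packing of `G`: a weight function on triples of vertices, supported
on triangles of `G`, with values in `[0,1]`, such that every edge carries total weight ≤ 1. -/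
def SimpleGraph.IsFracTrianglePacking [Fintype V] [DecidableEq V] (G : SimpleGraph V)
    (w : Finset V → ℝ) : Prop :=
  (∀ T, 0 ≤ w T ∧ w T ≤ 1) ∧
  (∀ T, ¬ G.IsNClique 3 T → w T = 0) ∧
  ∀ u v : V, G.Adj u v →
    ∑ T ∈ univ.filter (fun T : Finset V => G.IsNClique 3 T ∧ u ∈ T ∧ v ∈ T), w T ≤ 1

/-- `ν*(G)`: the maximum size `3 ∑ w(T)` of a fractional triangle packing of `G`. -/
noncomputable def SimpleGraph.nuStar [Fintype V] [DecidableEq V] (G : SimpleGraph V) : ℝ :=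
  sSup {x | ∃ w : Finset V → ℝ, G.IsFracTrianglePacking w ∧ x = 3 * ∑ T : Finset V, w T}

/-- `η(G) = ν*(G)/(n(n-1))` where `n = |V(G)|`. -/
noncomputable def SimpleGraph.etaPack [Fintype V] [DecidableEq V] (G : SimpleGraph V) : ℝ :=
  G.nuStar / ((Fintype.card V : ℝ) * ((Fintype.card V : ℝ) - 1))

/-- A fractional triangle decomposition: a fractional packing with equality on every edge. -/
def SimpleGraph.IsFracTriangleDecomposition [Fintype V] [DecidableEq V] (G : SimpleGraph V)
    (w : Finset V → ℝ) : Prop :=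
  G.IsFracTrianglePacking w ∧
  ∀ u v : V, G.Adj u v →
    ∑ T ∈ univ.filter (fun T : Finset V => G.IsNClique 3 T ∧ u ∈ T ∧ v ∈ T), w T = 1

/-- `G` is `ε`-far from bipartite: every bipartite subgraph misses at least `ε n²` edges. -/
def FarFromBipartite [Fintype V] [DecidableEq V] (ε : ℝ) (G : SimpleGraph V) : Prop :=
  ∀ H : SimpleGraph V, H ≤ G → H.Colorable 2 →
    ε * (Fintype.card V : ℝ) ^ 2 ≤ (G.edgeFinset.card : ℝ) - (H.edgeFinset.card : ℝ)

/-- The disjoint union of two cliques on `⌈n/2⌉`-ish halves of `Fin n`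
(the first `n/2` vertices form one clique, the rest form the other). -/
def twoCliques (n : ℕ) : SimpleGraph (Fin n) where
  Adj u v := u ≠ v ∧ ((u : ℕ) < n / 2 ↔ (v : ℕ) < n / 2)
  symm := by constructor; intro u v h; exact ⟨h.1.symm, h.2.symm⟩
  loopless := by constructor; intro u h; exact h.1 rfl

/-- `g(n)`: minimum over co-triangle-free `n`-vertex graphs of the max triangle packing size. -/
noncomputable def gInt (n : ℕ) : ℕ :=
  sInf {m | ∃ G : SimpleGraph (Fin n), Gᶜ.CliqueFree 3 ∧ m = G.triangleNu}

/-- `g*(n)`: minimum over co-triangle-free `n`-vertex graphs of `ν*`. -/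
noncomputable def gStar (n : ℕ) : ℝ :=
  sInf {x | ∃ G : SimpleGraph (Fin n), Gᶜ.CliqueFree 3 ∧ x = G.nuStar}


section AuxStmt4

variable {V : Type*} [Fintype V] [DecidableEq V]

lemma nuStarSet_nonempty (G : SimpleGraph V) :
    {x | ∃ w : Finset V → ℝ, G.IsFracTrianglePacking w ∧ x = 3 * ∑ T : Finset V, w T}.Nonempty := by
  refine ⟨0, fun _ => 0, ⟨fun T => by norm_num, fun T _ => rfl, fun u v _ => by simp⟩, by simp⟩

lemma nuStarSet_bddAbove (G : SimpleGraph V) :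
    BddAbove {x | ∃ w : Finset V → ℝ, G.IsFracTrianglePacking w ∧ x = 3 * ∑ T : Finset V, w T} := by
  refine ⟨3 * (Fintype.card (Finset V) : ℝ), ?_⟩
  rintro x ⟨w, hw, rfl⟩
  have h : ∑ T : Finset V, w T ≤ ∑ T : Finset V, (1 : ℝ) :=
    Finset.sum_le_sum fun T _ => (hw.1 T).2
  simp only [Finset.sum_const, Finset.card_univ, nsmul_eq_mul, mul_one] at h
  linarith

/-- The subtype embedding. -/
lemma induce_isNClique_iff (G : SimpleGraph V) (s : Set V) (T' : Finset s) :
    (G.induce s).IsNClique 3 T' ↔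
      G.IsNClique 3 (T'.map (Function.Embedding.subtype _)) := by
  constructor
  · intro h
    refine ⟨?_, by simp [h.2]⟩
    rw [Finset.coe_map]
    rintro x ⟨a, ha, rfl⟩ y ⟨b, hb, rfl⟩ hxy
    exact h.1 ha hb fun hab => hxy (by rw [hab])
  · intro h
    refine ⟨?_, by simpa using h.2⟩
    intro a ha b hb hab
    have hx : (Function.Embedding.subtype _ a : V) ∈ (↑(T'.map (Function.Embedding.subtype (· ∈ s))) : Set V) := by
      rw [Finset.coe_map]; exact ⟨a, ha, rfl⟩
    have hy : (Function.Embedding.subtype _ b : V) ∈ (↑(T'.map (Function.Embedding.subtype (· ∈ s))) : Set V) := by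
      rw [Finset.coe_map]; exact ⟨b, hb, rfl⟩
    exact h.1 hx hy fun hv => hab (Subtype.ext hv)


noncomputable def liftW (s : Set V) [Fintype s] (w' : Finset s → ℝ) : Finset V → ℝ :=
  fun T => ∑ T' : Finset s, if T'.map (Function.Embedding.subtype _) = T then w' T' else 0

lemma liftW_cases (s : Set V) [Fintype s] (w' : Finset s → ℝ) (T : Finset V) :
    liftW s w' T = 0 ∨
      ∃ T' : Finset s, T'.map (Function.Embedding.subtype _) = T ∧ liftW s w' T = w' T' := by
  by_cases h : ∃ T' : Finset s, T'.map (Function.Embedding.subtype _) = T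
  · obtain ⟨T', hT'⟩ := h
    right
    refine ⟨T', hT', ?_⟩
    rw [liftW, Finset.sum_eq_single_of_mem T' (Finset.mem_univ _)]
    · rw [if_pos hT']
    · intro b _ hb
      rw [if_neg]
      intro hh
      exact hb (Finset.map_injective _ (hh.trans hT'.symm))
  · left
    refine Finset.sum_eq_zero fun T' _ => ?_
    rw [if_neg fun hh => h ⟨T', hh⟩]

lemma liftW_sum (s : Set V) [Fintype s] (w' : Finset s → ℝ) (A : Finset (Finset V)) :
    ∑ T ∈ A, liftW s w' T =
      ∑ T' ∈ Finset.univ.filter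
        (fun T' : Finset s => T'.map (Function.Embedding.subtype _) ∈ A), w' T' := by
  rw [Finset.sum_filter]
  unfold liftW
  rw [Finset.sum_comm]
  refine Finset.sum_congr rfl fun T' _ => ?_
  rw [Finset.sum_ite_eq A (T'.map (Function.Embedding.subtype _)) (fun _ => w' T')]

lemma liftW_nonneg (s : Set V) [Fintype s] {w' : Finset s → ℝ}
    (h : ∀ T', 0 ≤ w' T') (T : Finset V) : 0 ≤ liftW s w' T :=
  Finset.sum_nonneg fun T' _ => by split_ifs; exacts [h T', le_rfl]

lemma mem_map_subtype_iff {s : Set V} {T' : Finset s} {u : V} (hu : u ∈ s) :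
    u ∈ T'.map (Function.Embedding.subtype _) ↔ (⟨u, hu⟩ : s) ∈ T' := by
  constructor
  · intro h
    obtain ⟨a, ha, hav⟩ := Finset.mem_map.mp h
    have : (⟨u, hu⟩ : s) = a := Subtype.ext (by simpa using hav.symm)
    rwa [this]
  · intro h
    exact Finset.mem_map_of_mem _ h

lemma liftW_packing {G : SimpleGraph V} {s : Set V} [Fintype s] {w' : Finset s → ℝ}
    (hw' : (G.induce s).IsFracTrianglePacking w') :
    (∀ T, 0 ≤ liftW s w' T ∧ liftW s w' T ≤ 1) ∧
    (∀ T : Finset V, liftW s w' T ≠ 0 → G.IsNClique 3 T ∧ (↑T : Set V) ⊆ s) ∧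
    (∀ u u' : V, u ∈ s → u' ∈ s → G.Adj u u' →
      ∑ T ∈ Finset.univ.filter (fun T : Finset V => G.IsNClique 3 T ∧ u ∈ T ∧ u' ∈ T),
        liftW s w' T ≤ 1) ∧
    ∑ T : Finset V, liftW s w' T = ∑ T' : Finset s, w' T' := by
  refine ⟨?_, ?_, ?_, ?_⟩
  · intro T
    refine ⟨liftW_nonneg s (fun T' => (hw'.1 T').1) T, ?_⟩
    rcases liftW_cases s w' T with h | ⟨T', _, h⟩
    · rw [h]; norm_num
    · rw [h]; exact (hw'.1 T').2
  · intro T hT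
    rcases liftW_cases s w' T with h | ⟨T', hmap, h⟩
    · exact absurd h hT
    · have hw'ne : w' T' ≠ 0 := fun hz => hT (h.trans hz)
      have htri : (G.induce s).IsNClique 3 T' := by
        by_contra hc
        exact hw'ne (hw'.2.1 T' hc)
      refine ⟨hmap ▸ (induce_isNClique_iff G s T').mp htri, ?_⟩
      rw [← hmap, Finset.coe_map]
      rintro x ⟨a, _, rfl⟩
      exact a.2
  · intro u u' hu hu' hadj
    rw [liftW_sum]
    have hfil : Finset.univ.filter
          (fun T' : Finset s => T'.map (Function.Embedding.subtype _) ∈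
            Finset.univ.filter (fun T : Finset V => G.IsNClique 3 T ∧ u ∈ T ∧ u' ∈ T)) =
        Finset.univ.filter (fun T' : Finset s =>
          (G.induce s).IsNClique 3 T' ∧ (⟨u, hu⟩ : s) ∈ T' ∧ (⟨u', hu'⟩ : s) ∈ T') := by
      refine Finset.filter_congr fun T' _ => ?_
      simp only [Finset.mem_filter, Finset.mem_univ, true_and]
      rw [← induce_isNClique_iff, mem_map_subtype_iff hu, mem_map_subtype_iff hu']
    rw [hfil]
    exact hw'.2.2 ⟨u, hu⟩ ⟨u', hu'⟩ (by simpa using hadj)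
  · rw [liftW_sum]
    simp


end AuxStmt4

/-- averaging: `ν*(G) ≥ (1/(n-2)) ∑_v ν*(G_v)`; equivalently
`η(G) ≥ (1/n) ∑_v η(G_v)`. -/
theorem stmt4 {V : Type*} [Fintype V] [DecidableEq V] (G : SimpleGraph V)
    (hn : 3 ≤ Fintype.card V) :
    (1 / ((Fintype.card V : ℝ) - 2)) *
        ∑ v : V, (G.induce ({v}ᶜ : Set V)).nuStar ≤ G.nuStar ∧
    (1 / (Fintype.card V : ℝ)) *
        ∑ v : V, (G.induce ({v}ᶜ : Set V)).etaPack ≤ G.etaPack := by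
  classical
  have hn3 : (3 : ℝ) ≤ (Fintype.card V : ℝ) := by exact_mod_cast hn
  have hn2 : (0 : ℝ) < (Fintype.card V : ℝ) - 2 := by linarith
  have hnpos : (0 : ℝ) < (Fintype.card V : ℝ) := by linarith
  have key : (1 / ((Fintype.card V : ℝ) - 2)) *
      ∑ v : V, (G.induce ({v}ᶜ : Set V)).nuStar ≤ G.nuStar := by
    refine le_of_forall_pos_le_add fun ε hε => ?_
    set δ : ℝ := ε * ((Fintype.card V : ℝ) - 2) / (Fintype.card V : ℝ) with hδdef
    have hδ : 0 < δ := by positivity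
    have hch : ∀ v : V, ∃ w : Finset ({v}ᶜ : Set V) → ℝ,
        (G.induce ({v}ᶜ : Set V)).IsFracTrianglePacking w ∧
        (G.induce ({v}ᶜ : Set V)).nuStar - δ ≤ 3 * ∑ T' : Finset ({v}ᶜ : Set V), w T' := by
      intro v
      obtain ⟨x, hx, hlt⟩ := exists_lt_of_lt_csSup (nuStarSet_nonempty (G.induce ({v}ᶜ : Set V)))
        (sub_lt_self _ hδ)
      obtain ⟨w, hw, rfl⟩ := hx
      exact ⟨w, hw, le_of_lt hlt⟩
    choose w hw hwval using hch
    have hprop := fun v : V => liftW_packing (hw v)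
    set Wv : ∀ _ : V, Finset V → ℝ := fun v => liftW ({v}ᶜ : Set V) (w v) with hWvdef
    set W : Finset V → ℝ :=
      fun T => (1 / ((Fintype.card V : ℝ) - 2)) * ∑ v : V, Wv v T with hWdef
    have hzeroin : ∀ (v : V) (T : Finset V), v ∈ T → Wv v T = 0 := by
      intro v T hvT
      by_contra h
      have := ((hprop v).2.1 T h).2 hvT
      simp at this
    have hnn : ∀ (v : V) (T : Finset V), 0 ≤ Wv v T := fun v T => ((hprop v).1 T).1
    have hle1 : ∀ (v : V) (T : Finset V), Wv v T ≤ 1 := fun v T => ((hprop v).1 T).2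
    have hWnn : ∀ T, 0 ≤ W T := fun T =>
      mul_nonneg (by positivity) (Finset.sum_nonneg fun v _ => hnn v T)
    have hWtri : ∀ T : Finset V, ¬ G.IsNClique 3 T → W T = 0 := by
      intro T hT
      have hz : ∀ v : V, Wv v T = 0 := by
        intro v
        by_contra h
        exact hT ((hprop v).2.1 T h).1
      rw [hWdef]
      simp only
      rw [Finset.sum_eq_zero fun v _ => hz v, mul_zero]
    have hWpack : G.IsFracTrianglePacking W := by
      refine ⟨?_, hWtri, ?_⟩
      · intro T
        refine ⟨hWnn T, ?_⟩
        by_cases hT : G.IsNClique 3 T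
        · have hsd := Finset.sum_sdiff (Finset.subset_univ T) (f := fun v => Wv v T)
          have h2 : ∑ v ∈ T, Wv v T = 0 := Finset.sum_eq_zero fun v hv => hzeroin v T hv
          have h1 : ∑ v ∈ Finset.univ \ T, Wv v T ≤ ((Finset.univ \ T).card : ℝ) := by
            calc ∑ v ∈ Finset.univ \ T, Wv v T ≤ ∑ _v ∈ Finset.univ \ T, (1 : ℝ) :=
                  Finset.sum_le_sum fun v _ => hle1 v T
              _ = ((Finset.univ \ T).card : ℝ) := by simp
          have hcard2 : ((Finset.univ \ T).card : ℝ) ≤ (Fintype.card V : ℝ) - 2 := by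
            rw [Finset.card_sdiff_of_subset (Finset.subset_univ T), hT.2, Finset.card_univ,
              Nat.cast_sub hn]
            push_cast
            linarith
          have hsum : ∑ v : V, Wv v T ≤ (Fintype.card V : ℝ) - 2 := by linarith
          calc W T ≤ (1 / ((Fintype.card V : ℝ) - 2)) * ((Fintype.card V : ℝ) - 2) := by
                rw [hWdef]
                exact mul_le_mul_of_nonneg_left hsum (by positivity)
            _ = 1 := by field_simp
        · rw [hWtri T hT]; norm_num
      · intro u u' hadj
        set A := Finset.univ.filter
          (fun T : Finset V => G.IsNClique 3 T ∧ u ∈ T ∧ u' ∈ T) with hAdef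
        set c : V → ℝ := fun v => ∑ T ∈ A, Wv v T with hcdef
        have hc1 : ∀ v : V, c v ≤ 1 := by
          intro v
          by_cases hvu : v = u ∨ v = u'
          · have : c v = 0 := Finset.sum_eq_zero fun T hTA => by
              have hTmem := Finset.mem_filter.mp hTA
              rcases hvu with rfl | rfl
              exacts [hzeroin v T hTmem.2.2.1, hzeroin v T hTmem.2.2.2]
            rw [this]; norm_num
          · push_neg at hvu
            have hu : u ∈ ({v}ᶜ : Set V) := by
              simp only [Set.mem_compl_iff, Set.mem_singleton_iff]
              exact fun h => hvu.1 h.symm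
            have hu' : u' ∈ ({v}ᶜ : Set V) := by
              simp only [Set.mem_compl_iff, Set.mem_singleton_iff]
              exact fun h => hvu.2 h.symm
            exact (hprop v).2.2.1 u u' hu hu' hadj
        have hc0 : ∀ v ∈ ({u, u'} : Finset V), c v = 0 := by
          intro v hv
          refine Finset.sum_eq_zero fun T hTA => ?_
          have hTmem := Finset.mem_filter.mp hTA
          rcases Finset.mem_insert.mp hv with rfl | hv'
          · exact hzeroin v T hTmem.2.2.1
          · rw [Finset.mem_singleton.mp hv']
            exact hzeroin u' T hTmem.2.2.2
        have hsd := Finset.sum_sdiff (Finset.subset_univ ({u, u'} : Finset V)) (f := c)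
        have e0 : ∑ v ∈ ({u, u'} : Finset V), c v = 0 := Finset.sum_eq_zero hc0
        have e1 : ∑ v ∈ Finset.univ \ ({u, u'} : Finset V), c v
            ≤ ((Finset.univ \ ({u, u'} : Finset V)).card : ℝ) := by
          calc ∑ v ∈ Finset.univ \ ({u, u'} : Finset V), c v
              ≤ ∑ _v ∈ Finset.univ \ ({u, u'} : Finset V), (1 : ℝ) :=
                Finset.sum_le_sum fun v _ => hc1 v
            _ = _ := by simp
        have ecard : ((Finset.univ \ ({u, u'} : Finset V)).card : ℝ)
            = (Fintype.card V : ℝ) - 2 := by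
          rw [Finset.card_sdiff_of_subset (Finset.subset_univ _), Finset.card_univ,
            Finset.card_insert_of_notMem (by simp [hadj.ne]), Finset.card_singleton,
            Nat.cast_sub (le_trans (by norm_num) hn)]
          norm_num
        have hsum : ∑ v : V, c v ≤ (Fintype.card V : ℝ) - 2 := by
          rw [← hsd]; rw [e0, add_zero]; linarith [e1, ecard.le, ecard.ge]
        have hswap : ∑ T ∈ A, W T = (1 / ((Fintype.card V : ℝ) - 2)) * ∑ v : V, c v := by
          rw [hWdef]
          simp only
          rw [← Finset.mul_sum, Finset.sum_comm]
        calc ∑ T ∈ A, W T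
            ≤ (1 / ((Fintype.card V : ℝ) - 2)) * ((Fintype.card V : ℝ) - 2) := by
              rw [hswap]
              exact mul_le_mul_of_nonneg_left hsum (by positivity)
          _ = 1 := by field_simp
    have hmem : (3 * ∑ T : Finset V, W T) ∈
        {x | ∃ w : Finset V → ℝ, G.IsFracTrianglePacking w ∧ x = 3 * ∑ T : Finset V, w T} :=
      ⟨W, hWpack, rfl⟩
    have hle : 3 * ∑ T : Finset V, W T ≤ G.nuStar := le_csSup (nuStarSet_bddAbove G) hmem
    have hsumW : ∑ T : Finset V, W T = (1 / ((Fintype.card V : ℝ) - 2)) *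
        ∑ v : V, ∑ T' : Finset ({v}ᶜ : Set V), w v T' := by
      rw [hWdef]
      simp only
      rw [← Finset.mul_sum, Finset.sum_comm]
      congr 1
      exact Finset.sum_congr rfl fun v _ => (hprop v).2.2.2
    have hlower : ∑ v : V, ((G.induce ({v}ᶜ : Set V)).nuStar - δ)
        ≤ ∑ v : V, 3 * ∑ T' : Finset ({v}ᶜ : Set V), w v T' :=
      Finset.sum_le_sum fun v _ => hwval v
    rw [Finset.sum_sub_distrib, Finset.sum_const, Finset.card_univ, ← Finset.mul_sum] at hlower
    have hδsum : (Fintype.card V : ℝ) * δ = ε * ((Fintype.card V : ℝ) - 2) := by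
      rw [hδdef]
      field_simp
    have hfinal : (1 / ((Fintype.card V : ℝ) - 2)) *
        ∑ v : V, (G.induce ({v}ᶜ : Set V)).nuStar - ε ≤ 3 * ∑ T : Finset V, W T := by
      rw [hsumW]
      have h3 : ∑ v : V, (G.induce ({v}ᶜ : Set V)).nuStar - ε * ((Fintype.card V : ℝ) - 2)
          ≤ 3 * ∑ v : V, ∑ T' : Finset ({v}ᶜ : Set V), w v T' := by
        rw [nsmul_eq_mul] at hlower
        linarith [hlower, hδsum]
      have := mul_le_mul_of_nonneg_left h3
        (le_of_lt (one_div_pos.mpr hn2))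
      calc (1 / ((Fintype.card V : ℝ) - 2)) *
            ∑ v : V, (G.induce ({v}ᶜ : Set V)).nuStar - ε
          = (1 / ((Fintype.card V : ℝ) - 2)) *
            (∑ v : V, (G.induce ({v}ᶜ : Set V)).nuStar - ε * ((Fintype.card V : ℝ) - 2)) := by
            have hc : (1 / ((Fintype.card V : ℝ) - 2)) * (ε * ((Fintype.card V : ℝ) - 2)) = ε := by
              field_simp
            rw [mul_sub, hc]
        _ ≤ (1 / ((Fintype.card V : ℝ) - 2)) *
            (3 * ∑ v : V, ∑ T' : Finset ({v}ᶜ : Set V), w v T') := this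
        _ = 3 * ((1 / ((Fintype.card V : ℝ) - 2)) *
            ∑ v : V, ∑ T' : Finset ({v}ᶜ : Set V), w v T') := by ring
    linarith
  refine ⟨key, ?_⟩
  have hcard1 : ∀ v : V, (Fintype.card ({v}ᶜ : Set V) : ℝ) = (Fintype.card V : ℝ) - 1 := by
    intro v
    have h : Fintype.card ({v}ᶜ : Set V) = Fintype.card V - 1 := by
      have := Fintype.card_compl_set ({v} : Set V)
      simp only [Set.card_singleton] at this
      rw [← this]
      try exact Fintype.card_congr (Equiv.refl _)
    rw [h, Nat.cast_sub (by omega)]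
    try norm_num
  have heta : ∀ v : V, (G.induce ({v}ᶜ : Set V)).etaPack =
      (G.induce ({v}ᶜ : Set V)).nuStar /
        (((Fintype.card V : ℝ) - 1) * ((Fintype.card V : ℝ) - 2)) := by
    intro v
    rw [SimpleGraph.etaPack, hcard1 v]
    congr 1
    ring
  rw [SimpleGraph.etaPack, Finset.sum_congr rfl fun v _ => heta v, ← Finset.sum_div]
  have hne1 : ((Fintype.card V : ℝ) - 1) ≠ 0 := by linarith
  have hne2 : ((Fintype.card V : ℝ) - 2) ≠ 0 := ne_of_gt hn2
  have hne0 : (Fintype.card V : ℝ) ≠ 0 := ne_of_gt hnpos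
  have e : (1 / (Fintype.card V : ℝ)) *
      ((∑ v : V, (G.induce ({v}ᶜ : Set V)).nuStar) /
        (((Fintype.card V : ℝ) - 1) * ((Fintype.card V : ℝ) - 2)))
      = ((1 / ((Fintype.card V : ℝ) - 2)) * ∑ v : V, (G.induce ({v}ᶜ : Set V)).nuStar) /
        ((Fintype.card V : ℝ) * ((Fintype.card V : ℝ) - 1)) := by
    field_simp
  rw [e]
  have hden : (0 : ℝ) < (Fintype.card V : ℝ) * ((Fintype.card V : ℝ) - 1) := by nlinarith
  exact (div_le_div_iff_of_pos_right hden).mpr key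
end

section
/- Let G be a graph on n ≥ 3 vertices and for each vertex v of G let G_v denote the induced subgraph of G on the remaining n−1 vertices. If every G_v admits a fractional triangle decomposition, then G admits a fractional triangle decomposition. -/
open Finset
open scoped Classical

variable {V : Type*}

lemma aux_key {V : Type*} [Fintype V] [DecidableEq V] (G : SimpleGraph V) (v : V)
    (T' : Finset ({v}ᶜ : Set V)) :
    (G.induce ({v}ᶜ : Set V)).IsNClique 3 T' ↔
      G.IsNClique 3 (T'.map (Function.Embedding.subtype _)) := by
  rw [SimpleGraph.isNClique_iff, SimpleGraph.isNClique_iff, card_map]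
  refine and_congr_left fun _ => ?_
  constructor
  · intro hc x hx y hy hxy
    simp only [coe_map, Set.mem_image, mem_coe, Function.Embedding.coe_subtype] at hx hy
    obtain ⟨a, ha, rfl⟩ := hx
    obtain ⟨b, hb, rfl⟩ := hy
    simpa using hc ha hb (fun hab => hxy (congrArg _ hab))
  · intro hc a ha b hb hab
    simp only [SimpleGraph.comap_adj, Function.Embedding.coe_subtype]
    exact hc (by simp only [coe_map, Set.mem_image, mem_coe,
        Function.Embedding.coe_subtype]; exact ⟨a, ha, rfl⟩)
      (by simp only [coe_map, Set.mem_image, mem_coe,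
        Function.Embedding.coe_subtype]; exact ⟨b, hb, rfl⟩)
      (Subtype.coe_injective.ne hab)

lemma aux_subtype_map {V : Type*} [DecidableEq V] (v : V) (T : Finset V) (hv : v ∉ T) :
    (T.subtype (fun x => x ∈ ({v}ᶜ : Set V))).map (Function.Embedding.subtype _) = T :=
  Finset.subtype_map_of_mem (fun x hx => by simp; rintro rfl; exact hv hx)

lemma aux_map_subtype {V : Type*} [DecidableEq V] (v : V) (T' : Finset ({v}ᶜ : Set V)) :
    ((T'.map (Function.Embedding.subtype _)).subtype (fun x => x ∈ ({v}ᶜ : Set V))) = T' := by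
  ext ⟨x, hx⟩
  simp only [Finset.mem_subtype, Finset.mem_map, Function.Embedding.coe_subtype]
  constructor
  · rintro ⟨⟨y, hy⟩, hyT, rfl⟩; exact hyT
  · intro hT; exact ⟨⟨x, hx⟩, hT, rfl⟩


/-- if every one-vertex-deleted induced subgraph of `G` has a fractional
triangle decomposition, then so does `G`. -/
theorem stmt7 {V : Type*} [Fintype V] [DecidableEq V] (G : SimpleGraph V)
    (hn : 3 ≤ Fintype.card V)
    (h : ∀ v : V, ∃ w, (G.induce ({v}ᶜ : Set V)).IsFracTriangleDecomposition w) :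
    ∃ w, G.IsFracTriangleDecomposition w := by
  classical
  choose w hw using h
  have hn3 : (3:ℝ) ≤ (Fintype.card V:ℝ) := by exact_mod_cast hn
  have hn2pos : (0:ℝ) < (Fintype.card V:ℝ) - 2 := by linarith
  set c : ℝ := ((Fintype.card V:ℝ) - 2)⁻¹ with hc
  have hcpos : (0:ℝ) < c := inv_pos.mpr hn2pos
  set W : Finset V → ℝ := fun T =>
    if G.IsNClique 3 T then
      c * ∑ v ∈ univ \ T, w v (T.subtype (fun x => x ∈ ({v}ᶜ : Set V)))
    else 0 with hW
  -- the key edge computation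
  have hedge : ∀ u u' : V, G.Adj u u' →
      ∑ T ∈ univ.filter (fun T : Finset V => G.IsNClique 3 T ∧ u ∈ T ∧ u' ∈ T), W T = 1 := by
    intro u u' huu'
    have hne : u ≠ u' := huu'.ne
    set A := univ.filter (fun T : Finset V => G.IsNClique 3 T ∧ u ∈ T ∧ u' ∈ T) with hA
    have h1 : ∑ T ∈ A, W T
        = c * ∑ T ∈ A, ∑ v ∈ univ \ T, w v (T.subtype (fun x => x ∈ ({v}ᶜ : Set V))) := by
      rw [mul_sum]
      refine sum_congr rfl fun T hT => ?_
      rw [hA, mem_filter] at hT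
      simp only [hW, if_pos hT.2.1]
    have h2 : ∑ T ∈ A, ∑ v ∈ univ \ T, w v (T.subtype (fun x => x ∈ ({v}ᶜ : Set V)))
        = ∑ v ∈ univ, ∑ T ∈ A.filter (fun T => v ∉ T),
            w v (T.subtype (fun x => x ∈ ({v}ᶜ : Set V))) := by
      calc ∑ T ∈ A, ∑ v ∈ univ \ T, w v (T.subtype (fun x => x ∈ ({v}ᶜ : Set V)))
          = ∑ T ∈ A, ∑ v ∈ univ, if v ∉ T then
              w v (T.subtype (fun x => x ∈ ({v}ᶜ : Set V))) else 0 := by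
            refine sum_congr rfl fun T _ => ?_
            rw [← sum_filter]
            congr 1
            ext v; simp [mem_sdiff]
        _ = ∑ v ∈ univ, ∑ T ∈ A, if v ∉ T then
              w v (T.subtype (fun x => x ∈ ({v}ᶜ : Set V))) else 0 := sum_comm
        _ = _ := by
            refine sum_congr rfl fun v _ => (sum_filter _ _).symm
    have h3 : ∀ v : V, v ≠ u → v ≠ u' →
        ∑ T ∈ A.filter (fun T => v ∉ T),
            w v (T.subtype (fun x => x ∈ ({v}ᶜ : Set V))) = 1 := by
      intro v hvu hvu'
      have hu : u ∈ ({v}ᶜ : Set V) := by simp [Ne.symm hvu]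
      have hu' : u' ∈ ({v}ᶜ : Set V) := by simp [Ne.symm hvu']
      have hadj : (G.induce ({v}ᶜ : Set V)).Adj ⟨u, hu⟩ ⟨u', hu'⟩ := by
        simpa using huu'
      have hdec := (hw v).2 ⟨u, hu⟩ ⟨u', hu'⟩ hadj
      rw [← hdec]
      refine sum_bij' (fun T _ => T.subtype (fun x => x ∈ ({v}ᶜ : Set V)))
        (fun T' _ => T'.map (Function.Embedding.subtype _)) ?_ ?_ ?_ ?_ ?_
      · intro T hT
        rw [mem_filter, hA, mem_filter] at hT
        obtain ⟨⟨-, hcl, huT, hu'T⟩, hvT⟩ := hT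
        rw [mem_filter]
        refine ⟨mem_univ _, ?_, ?_, ?_⟩
        · rw [aux_key, aux_subtype_map v T hvT]; exact hcl
        · simp [Finset.mem_subtype, huT]
        · simp [Finset.mem_subtype, hu'T]
      · intro T' hT'
        rw [mem_filter] at hT'
        obtain ⟨-, hcl, huT, hu'T⟩ := hT'
        rw [mem_filter, hA, mem_filter]
        have hvmap : v ∉ T'.map (Function.Embedding.subtype _) := by
          intro hmem
          rw [Finset.mem_map] at hmem
          obtain ⟨⟨y, hy⟩, -, hyv⟩ := hmem
          exact hy (by simpa using hyv)
        refine ⟨⟨mem_univ _, (aux_key G v T').mp hcl, ?_, ?_⟩, hvmap⟩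
        · rw [Finset.mem_map]; exact ⟨⟨u, hu⟩, huT, rfl⟩
        · rw [Finset.mem_map]; exact ⟨⟨u', hu'⟩, hu'T, rfl⟩
      · intro T hT
        rw [mem_filter] at hT
        exact aux_subtype_map v T hT.2
      · intro T' _
        exact aux_map_subtype v T'
      · intro T _
        rfl
    have h4 : ∀ v : V, v = u ∨ v = u' →
        ∑ T ∈ A.filter (fun T => v ∉ T),
            w v (T.subtype (fun x => x ∈ ({v}ᶜ : Set V))) = 0 := by
      intro v hv
      rw [Finset.sum_eq_zero_iff_of_nonneg (fun T _ => ((hw v).1.1 _).1) |>.mpr, ]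
      intro T hT
      rw [mem_filter, hA, mem_filter] at hT
      obtain ⟨⟨-, -, huT, hu'T⟩, hvT⟩ := hT
      rcases hv with rfl | rfl
      · exact (hvT huT).elim
      · exact (hvT hu'T).elim
    rw [h1, h2]
    have h5 : ∑ v ∈ univ, ∑ T ∈ A.filter (fun T => v ∉ T),
        w v (T.subtype (fun x => x ∈ ({v}ᶜ : Set V))) = (Fintype.card V:ℝ) - 2 := by
      have : ∀ v ∈ univ, ∑ T ∈ A.filter (fun T => v ∉ T),
          w v (T.subtype (fun x => x ∈ ({v}ᶜ : Set V)))
            = if v = u ∨ v = u' then 0 else 1 := by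
        intro v _
        by_cases hv : v = u ∨ v = u'
        · rw [if_pos hv]; exact h4 v hv
        · push_neg at hv
          rw [if_neg (by push_neg; exact hv)]
          exact h3 v hv.1 hv.2
      rw [sum_congr rfl this, sum_ite, sum_const, sum_const, smul_zero, zero_add, nsmul_eq_mul,
        mul_one]
      have hfeq : univ.filter (fun v => ¬(v = u ∨ v = u')) = univ \ {u, u'} := by
        ext x; simp [not_or]
      rw [hfeq, card_sdiff_of_subset (subset_univ _), card_insert_of_notMem (by simp [hne]),
        card_singleton, card_univ]
      rw [Nat.cast_sub (by omega)]
      norm_num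
    rw [h5, hc, inv_mul_cancel₀ (by linarith)]
  refine ⟨W, ⟨⟨?_, ?_, ?_⟩, hedge⟩⟩
  · -- bounds
    intro T
    by_cases hcl : G.IsNClique 3 T
    · have hcard : T.card = 3 := hcl.2
      have hnn : ∀ v ∈ univ \ T, 0 ≤ w v (T.subtype (fun x => x ∈ ({v}ᶜ : Set V))) :=
        fun v _ => ((hw v).1.1 _).1
      constructor
      · rw [hW]; simp only [if_pos hcl]
        exact mul_nonneg hcpos.le (sum_nonneg hnn)
      · rw [hW]; simp only [if_pos hcl]
        have hub : ∑ v ∈ univ \ T, w v (T.subtype (fun x => x ∈ ({v}ᶜ : Set V)))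
            ≤ (univ \ T).card := by
          calc _ ≤ ∑ v ∈ univ \ T, (1:ℝ) := sum_le_sum fun v _ => ((hw v).1.1 _).2
            _ = _ := by rw [sum_const, nsmul_eq_mul, mul_one]
        have hcard2 : ((univ \ T).card : ℝ) ≤ (Fintype.card V:ℝ) - 2 := by
          rw [card_sdiff_of_subset (subset_univ _), hcard, card_univ]
          rw [Nat.cast_sub (by omega)]
          push_cast; linarith
        calc c * ∑ v ∈ univ \ T, w v (T.subtype (fun x => x ∈ ({v}ᶜ : Set V)))
            ≤ c * ((Fintype.card V:ℝ) - 2) := by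
              exact mul_le_mul_of_nonneg_left (hub.trans hcard2) hcpos.le
          _ = 1 := inv_mul_cancel₀ (by linarith)
    · rw [hW]; simp only [if_neg hcl]; norm_num
  · -- zero off cliques
    intro T hT
    rw [hW]; simp only [if_neg hT]
  · -- packing inequality
    intro u u' huu'
    rw [hedge u u' huu']
end

section
/- For all integers n ≥ 7 and 0 ≤ k ≤ ⌊n/2⌋, the graph obtained from the complete graph K_n by removing a matching of k edges admits a fractional triangle decomposition. -/
open Finset
open scoped Classical

variable {V : Type*}

noncomputable def fwt (n k t : ℕ) : ℝ :=
  if n = 2*k then (if t = 3 then 1/((n:ℝ)-4) else 0)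
  else if n = 2*k+1 then
    (if t = 2 then 1/((n:ℝ)-3) else if t = 3 then ((n:ℝ)-4)/(((n:ℝ)-3)*((n:ℝ)-5)) else 0)
  else if n = 2*k+2 then
    (if t = 1 then 1/((n:ℝ)-2) else if t = 2 then ((n:ℝ)-3)/(((n:ℝ)-2)*((n:ℝ)-4))
     else if t = 3 then ((n:ℝ)^2-8*(n:ℝ)+14)/(((n:ℝ)-2)*((n:ℝ)-4)*((n:ℝ)-6)) else 0)
  else
    (if t = 0 then (((n:ℝ)-2*(k:ℝ)-1)*((n:ℝ)-2*(k:ℝ)-4)+2*(k:ℝ))/(((n:ℝ)-2*(k:ℝ)-2)*((n:ℝ)-2*(k:ℝ)-1)*((n:ℝ)-4))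
     else if t = 1 then ((n:ℝ)-2*(k:ℝ)-2)/(((n:ℝ)-2*(k:ℝ)-1)*((n:ℝ)-4))
     else if t ≤ 3 then 1/((n:ℝ)-4) else 0)

lemma fwt_mem (n k t : ℕ) (hn : 7 ≤ n) (hk : 2*k ≤ n) :
    0 ≤ fwt n k t ∧ fwt n k t ≤ 1 := by
  have hN : (7:ℝ) ≤ (n:ℝ) := by exact_mod_cast hn
  have hK : (0:ℝ) ≤ (k:ℝ) := Nat.cast_nonneg k
  have p4 : (0:ℝ) < (n:ℝ)-4 := by linarith
  have p3 : (0:ℝ) < (n:ℝ)-3 := by linarith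
  have p2 : (0:ℝ) < (n:ℝ)-2 := by linarith
  have p5 : (0:ℝ) < (n:ℝ)-5 := by linarith
  unfold fwt
  split_ifs with h1 h2 h3 h4 h5 h6 h7 h8 h9 h10 h11 h12
  · constructor
    · positivity
    · rw [div_le_one p4]; linarith
  · norm_num
  · constructor
    · positivity
    · rw [div_le_one p3]; linarith
  · constructor
    · positivity
    · rw [div_le_one (by positivity)]; nlinarith [sq_nonneg ((n:ℝ)-5)]
  · norm_num
  · constructor
    · positivity
    · rw [div_le_one p2]; linarith
  · constructor
    · positivity
    · rw [div_le_one (by positivity)]; nlinarith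
  · have h8' : 8 ≤ n := by omega
    have hN8 : (8:ℝ) ≤ (n:ℝ) := by exact_mod_cast h8'
    have p6 : (0:ℝ) < (n:ℝ)-6 := by linarith
    constructor
    · apply div_nonneg _ (by positivity); nlinarith
    · rw [div_le_one (by positivity)]
      nlinarith [mul_nonneg (mul_nonneg (by linarith : (0:ℝ) ≤ (n:ℝ)-8) (by linarith : (0:ℝ) ≤ (n:ℝ)-5)) (by linarith : (0:ℝ) ≤ (n:ℝ))]
  · norm_num
  all_goals (
    try (have hm : 2*k + 3 ≤ n := by omega;
         have hm' : (2:ℝ)*(k:ℝ) + 3 ≤ (n:ℝ) := by exact_mod_cast hm;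
         have q1 : (0:ℝ) < (n:ℝ)-2*(k:ℝ)-1 := by linarith;
         have q2 : (0:ℝ) < (n:ℝ)-2*(k:ℝ)-2 := by linarith))
  · constructor
    · apply div_nonneg _ (by positivity)
      nlinarith [sq_nonneg ((n:ℝ)-2*(k:ℝ)-3)]
    · rw [div_le_one (by positivity)]
      nlinarith [mul_nonneg (mul_nonneg (by linarith : (0:ℝ) ≤ (n:ℝ)-2*(k:ℝ)-3) hK) hK,
        mul_nonneg (by linarith : (0:ℝ) ≤ (n:ℝ)-2*(k:ℝ)-3) hK,
        sq_nonneg ((n:ℝ)-2*(k:ℝ)-3), mul_nonneg hK hK,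
        mul_nonneg (sq_nonneg ((n:ℝ)-2*(k:ℝ)-3)) hK,
        mul_nonneg (sq_nonneg ((n:ℝ)-2*(k:ℝ)-3)) (by linarith : (0:ℝ) ≤ (n:ℝ)-2*(k:ℝ)-3)]
  · constructor
    · apply div_nonneg (by linarith) (by positivity)
    · rw [div_le_one (by positivity)]
      nlinarith [mul_nonneg (by linarith : (0:ℝ) ≤ (n:ℝ)-2*(k:ℝ)-3) hK]
  · constructor
    · positivity
    · rw [div_le_one p4]; linarith
  · norm_num

lemma fwt_eq (n k t0 : ℕ) (hn : 7 ≤ n) (hk : 2*k ≤ n) (ht0 : t0 ≤ 2)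
    (ht : 2*k + 2 ≤ n + t0) :
    (2*(k:ℝ) - 2*(t0:ℝ)) * fwt n k (t0+1) + ((n:ℝ) - 2*(k:ℝ) - 2 + (t0:ℝ)) * fwt n k t0 = 1 := by
  have hN : (7:ℝ) ≤ (n:ℝ) := by exact_mod_cast hn
  have p4 : ((n:ℝ)-4) ≠ 0 := by linarith
  have p3 : ((n:ℝ)-3) ≠ 0 := by linarith
  have p2 : ((n:ℝ)-2) ≠ 0 := by linarith
  have p5 : ((n:ℝ)-5) ≠ 0 := by linarith
  by_cases h1 : n = 2*k
  · -- m = 0 : t0 must be 2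
    have ht2 : t0 = 2 := by omega
    subst ht2; subst h1
    simp only [fwt, if_pos rfl]
    norm_num
    have hne : (2*(k:ℝ)-4) ≠ 0 := by push_cast at hN; linarith
    exact mul_inv_cancel₀ hne
  · by_cases h2 : n = 2*k+1
    · have ht12 : t0 = 1 ∨ t0 = 2 := by omega
      have hkR : (k:ℝ) = ((n:ℝ)-1)/2 := by subst h2; push_cast; ring
      rcases ht12 with h | h <;> subst h <;>
        simp only [fwt, if_neg h1, if_pos h2] <;> norm_num <;> rw [hkR] <;> field_simp <;> ring
    · by_cases h3 : n = 2*k+2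
      · have hkR : (k:ℝ) = ((n:ℝ)-2)/2 := by subst h3; push_cast; ring
        have h8' : 8 ≤ n := by omega
        have hN8 : (8:ℝ) ≤ (n:ℝ) := by exact_mod_cast h8'
        have p6 : ((n:ℝ)-6) ≠ 0 := by linarith
        interval_cases t0 <;>
          simp only [fwt, if_neg h1, if_neg h2, if_pos h3] <;> norm_num <;> rw [hkR] <;>
          field_simp <;> ring
      · have hm : 2*k + 3 ≤ n := by omega
        have hm' : (2:ℝ)*(k:ℝ) + 3 ≤ (n:ℝ) := by exact_mod_cast hm
        have q1 : ((n:ℝ)-2*(k:ℝ)-1) ≠ 0 := by linarith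
        have q2 : ((n:ℝ)-2*(k:ℝ)-2) ≠ 0 := by linarith
        interval_cases t0 <;>
          simp only [fwt, if_neg h1, if_neg h2, if_neg h3] <;> norm_num <;>
          field_simp <;> ring


set_option maxHeartbeats 2000000 in
/-- for `n ≥ 7` and `k ≤ ⌊n/2⌋`, `K_n` minus a `k`-edge matching has a
fractional triangle decomposition. -/
theorem stmt8 (n k : ℕ) (hn : 7 ≤ n) (hk : k ≤ n / 2) (M : SimpleGraph (Fin n))
    (hmatch : ∀ v : Fin n, M.degree v ≤ 1) (hcard : M.edgeFinset.card = k) :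
    ∃ w, ((⊤ : SimpleGraph (Fin n)) \ M).IsFracTriangleDecomposition w := by
  set G := (⊤ : SimpleGraph (Fin n)) \ M with hGdef
  have hsum : ∑ v : Fin n, M.degree v = 2 * k := by
    rw [SimpleGraph.sum_degrees_eq_twice_card_edges, hcard]
  have hk2 : 2 * k ≤ n := by
    have h1 : ∑ v : Fin n, M.degree v ≤ ∑ _v : Fin n, 1 :=
      Finset.sum_le_sum (fun v _ => hmatch v)
    simp only [Finset.sum_const, Finset.card_univ, Fintype.card_fin, smul_eq_mul, mul_one] at h1
    omega
  set w : Finset (Fin n) → ℝ :=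
    fun T => if G.IsNClique 3 T then fwt n k (∑ x ∈ T, M.degree x) else 0 with hw
  have hGadj : ∀ a b : Fin n, G.Adj a b ↔ a ≠ b ∧ ¬ M.Adj a b := by
    intro a b; simp [hGdef]
  have key : ∀ u v : Fin n, G.Adj u v →
      ∑ T ∈ univ.filter (fun T : Finset (Fin n) => G.IsNClique 3 T ∧ u ∈ T ∧ v ∈ T), w T = 1 := by
    intro u v huv
    obtain ⟨hne, hnM⟩ := (hGadj u v).mp huv
    set P : Fin n → Prop := fun x => x ≠ u ∧ x ≠ v ∧ ¬ M.Adj u x ∧ ¬ M.Adj v x with hP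
    set X := univ.filter P with hXdef
    have hmem : ∀ x ∈ X, x ≠ u ∧ x ≠ v ∧ ¬ M.Adj u x ∧ ¬ M.Adj v x := by
      intro x hx
      simpa [hXdef, hP] using hx
    -- the triangles containing u,v are exactly {u,v,x}, x ∈ X
    have himg : univ.filter (fun T : Finset (Fin n) => G.IsNClique 3 T ∧ u ∈ T ∧ v ∈ T)
        = X.image (fun x => ({u, v, x} : Finset (Fin n))) := by
      ext T
      simp only [mem_filter, mem_univ, true_and, mem_image]
      constructor
      · rintro ⟨hT, hu, hv⟩
        have hsub : ({u, v} : Finset (Fin n)) ⊆ T := by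
          intro z hz
          simp only [mem_insert, mem_singleton] at hz
          rcases hz with h | h <;> subst h <;> assumption
        have hc2 : ({u, v} : Finset (Fin n)).card = 2 := by
          rw [card_insert_of_notMem (by simpa using hne), card_singleton]
        have hc : (T \ {u, v}).card = 1 := by
          rw [card_sdiff_of_subset hsub, hT.2, hc2]
        obtain ⟨x, hx⟩ := Finset.card_eq_one.mp hc
        have hxmem : x ∈ T \ ({u, v} : Finset (Fin n)) := hx ▸ Finset.mem_singleton_self x
        have hxT : x ∈ T := (Finset.mem_sdiff.mp hxmem).1
        have hxuv : x ≠ u ∧ x ≠ v := by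
          have := (Finset.mem_sdiff.mp hxmem).2
          simp only [mem_insert, mem_singleton] at this
          exact ⟨fun h => this (Or.inl h), fun h => this (Or.inr h)⟩
        have hadjux : G.Adj u x := hT.1 hu hxT (Ne.symm hxuv.1)
        have hadjvx : G.Adj v x := hT.1 hv hxT (Ne.symm hxuv.2)
        refine ⟨x, ?_, ?_⟩
        · simp only [hXdef, hP, mem_filter, mem_univ, true_and]
          exact ⟨hxuv.1, hxuv.2, ((hGadj u x).mp hadjux).2, ((hGadj v x).mp hadjvx).2⟩
        · have hT' : T = ({u, v} : Finset (Fin n)) ∪ {x} := by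
            rw [← hx, Finset.union_sdiff_of_subset hsub]
          rw [hT']
          ext z; simp [or_assoc]
      · rintro ⟨x, hxX, rfl⟩
        obtain ⟨hxu, hxv, hMux, hMvx⟩ := hmem x hxX
        refine ⟨SimpleGraph.is3Clique_triple_iff.mpr ⟨huv, ?_, ?_⟩, by simp, by simp⟩
        · exact (hGadj u x).mpr ⟨Ne.symm hxu, hMux⟩
        · exact (hGadj v x).mpr ⟨Ne.symm hxv, hMvx⟩
    have hinj : ∀ x ∈ X, ∀ y ∈ X,
        ({u, v, x} : Finset (Fin n)) = {u, v, y} → x = y := by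
      intro x hx y hy hxy
      obtain ⟨hxu, hxv, -, -⟩ := hmem x hx
      have : x ∈ ({u, v, y} : Finset (Fin n)) := hxy ▸ (by simp)
      simp only [mem_insert, mem_singleton] at this
      tauto
    rw [himg, Finset.sum_image hinj]
    -- compute weights of {u,v,x}
    have hwx : ∀ x ∈ X, w {u, v, x} =
        (M.degree x : ℝ) * fwt n k (M.degree u + M.degree v + 1)
          + (1 - (M.degree x : ℝ)) * fwt n k (M.degree u + M.degree v) := by
      intro x hx
      obtain ⟨hxu, hxv, hMux, hMvx⟩ := hmem x hx
      have hclique : G.IsNClique 3 {u, v, x} :=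
        SimpleGraph.is3Clique_triple_iff.mpr
          ⟨huv, (hGadj u x).mpr ⟨Ne.symm hxu, hMux⟩, (hGadj v x).mpr ⟨Ne.symm hxv, hMvx⟩⟩
      have hts : ∑ y ∈ ({u, v, x} : Finset (Fin n)), M.degree y
          = M.degree u + M.degree v + M.degree x := by
        rw [Finset.sum_insert (by simp [hne, Ne.symm hxu]),
          Finset.sum_insert (by simp [Ne.symm hxv]), Finset.sum_singleton, add_assoc]
      simp only [hw, if_pos hclique, hts]
      rcases Nat.le_one_iff_eq_zero_or_eq_one.mp (hmatch x) with h | h <;> rw [h] <;>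
        push_cast <;> ring_nf <;> simp
    rw [Finset.sum_congr rfl hwx, Finset.sum_add_distrib, ← Finset.sum_mul, ← Finset.sum_mul,
      Finset.sum_sub_distrib, Finset.sum_const, nsmul_eq_mul, mul_one]
    -- counting
    set Y := univ.filter (fun x => ¬ P x) with hYdef
    have hY : Y = insert u (insert v (M.neighborFinset u ∪ M.neighborFinset v)) := by
      ext x
      simp only [hYdef, hP, mem_filter, mem_univ, true_and, mem_insert,
        mem_union, SimpleGraph.mem_neighborFinset]
      constructor
      · intro h
        by_contra hc
        push_neg at hc
        exact h ⟨hc.1, hc.2.1, hc.2.2.1, hc.2.2.2⟩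
      · rintro (rfl | rfl | h | h) <;> intro hcon
        · exact hcon.1 rfl
        · exact hcon.2.1 rfl
        · exact hcon.2.2.1 h
        · exact hcon.2.2.2 h
    have hvnot : v ∉ M.neighborFinset u ∪ M.neighborFinset v := by
      simp only [mem_union, SimpleGraph.mem_neighborFinset]
      rintro (h | h)
      · exact hnM h
      · exact M.loopless.irrefl v h
    have hunot : u ∉ insert v (M.neighborFinset u ∪ M.neighborFinset v) := by
      simp only [mem_insert, mem_union, SimpleGraph.mem_neighborFinset]
      rintro (h | h | h)
      · exact hne h
      · exact M.loopless.irrefl u h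
      · exact hnM h.symm
    have hdisj : Disjoint (M.neighborFinset u) (M.neighborFinset v) := by
      rw [Finset.disjoint_left]
      intro a hau hav
      rw [SimpleGraph.mem_neighborFinset] at hau hav
      have hsub : ({u, v} : Finset (Fin n)) ⊆ M.neighborFinset a := by
        intro z hz
        simp only [mem_insert, mem_singleton] at hz
        rcases hz with rfl | rfl <;> rw [SimpleGraph.mem_neighborFinset]
        · exact hau.symm
        · exact hav.symm
      have : 2 ≤ M.degree a := by
        have h2 : ({u, v} : Finset (Fin n)).card = 2 := by
          rw [card_insert_of_notMem (by simpa using hne), card_singleton]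
        calc 2 = ({u, v} : Finset (Fin n)).card := h2.symm
        _ ≤ (M.neighborFinset a).card := Finset.card_le_card hsub
        _ = M.degree a := rfl
      have := hmatch a
      omega
    have hNsum : ∀ z : Fin n, ∑ x ∈ M.neighborFinset z, M.degree x = M.degree z := by
      intro z
      have h1 : ∀ x ∈ M.neighborFinset z, M.degree x = 1 := by
        intro x hx
        rw [SimpleGraph.mem_neighborFinset] at hx
        have : z ∈ M.neighborFinset x := by rw [SimpleGraph.mem_neighborFinset]; exact hx.symm
        have h2 : 1 ≤ M.degree x := Finset.card_pos.mpr ⟨z, this⟩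
        have := hmatch x
        omega
      rw [Finset.sum_congr rfl h1, Finset.sum_const, smul_eq_mul, mul_one]
      rfl
    have hYsum : ∑ x ∈ Y, M.degree x = 2 * (M.degree u + M.degree v) := by
      rw [hY, Finset.sum_insert hunot, Finset.sum_insert hvnot,
        Finset.sum_union hdisj, hNsum u, hNsum v]
      ring
    have hYcard : Y.card = 2 + (M.degree u + M.degree v) := by
      rw [hY, Finset.card_insert_of_notMem hunot, Finset.card_insert_of_notMem hvnot,
        Finset.card_union_of_disjoint hdisj]
      have : (M.neighborFinset u).card = M.degree u := rfl
      have : (M.neighborFinset v).card = M.degree v := rfl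
      simp only [SimpleGraph.card_neighborFinset_eq_degree]
      ring
    have hsplitsum : ∑ x ∈ X, M.degree x + ∑ x ∈ Y, M.degree x = 2 * k := by
      rw [hXdef, hYdef, Finset.sum_filter_add_sum_filter_not, hsum]
    have hsplitcard : X.card + Y.card = n := by
      rw [hXdef, hYdef, Finset.card_filter_add_card_filter_not, Finset.card_univ,
        Fintype.card_fin]
    have hSX : ∑ x ∈ X, M.degree x + 2 * (M.degree u + M.degree v) = 2 * k := by omega
    have hXc : X.card + (2 + (M.degree u + M.degree v)) = n := by omega
    have hXle : ∑ x ∈ X, M.degree x ≤ X.card := by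
      calc ∑ x ∈ X, M.degree x ≤ ∑ _x ∈ X, 1 := Finset.sum_le_sum (fun x _ => hmatch x)
      _ = X.card := by simp
    have ht0 : M.degree u + M.degree v ≤ 2 := by
      have := hmatch u; have := hmatch v; omega
    have ht : 2 * k + 2 ≤ n + (M.degree u + M.degree v) := by omega
    have heq := fwt_eq n k (M.degree u + M.degree v) hn hk2 ht0 ht
    have hSR : (∑ x ∈ X, (M.degree x : ℝ))
        = 2 * (k : ℝ) - 2 * ((M.degree u + M.degree v : ℕ) : ℝ) := by
      have : ((∑ x ∈ X, M.degree x : ℕ) : ℝ) + 2 * ((M.degree u + M.degree v : ℕ) : ℝ)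
          = 2 * (k : ℝ) := by exact_mod_cast congrArg (Nat.cast : ℕ → ℝ) hSX
      push_cast at this ⊢
      linarith
    have hXR : ((X.card : ℕ) : ℝ) = (n : ℝ) - 2 - ((M.degree u + M.degree v : ℕ) : ℝ) := by
      have : ((X.card : ℕ) : ℝ) + (2 + ((M.degree u + M.degree v : ℕ) : ℝ)) = (n : ℝ) := by
        exact_mod_cast congrArg (Nat.cast : ℕ → ℝ) hXc
      push_cast at this ⊢
      linarith
    push_cast at hSR hXR heq ⊢
    rw [hSR, hXR]
    linear_combination heq
  refine ⟨w, ⟨⟨?_, ?_, ?_⟩, ?_⟩⟩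
  · intro T
    simp only [hw]
    split_ifs with h
    · exact fwt_mem n k _ hn hk2
    · norm_num
  · intro T hT
    simp only [hw, if_neg hT]
  · intro u v huv
    rw [Finset.filter_congr_decidable]
    exact le_of_eq (key u v huv)
  · intro u v huv
    rw [Finset.filter_congr_decidable]
    exact key u v huv
end

section
/- There exists a 2-colouring of the edges of the complete graph K_6 in which any two monochromatic triangles share an edge; consequently f(6) = 3, where f(n) is the largest m such that every 2-colouring of the edges of K_n contains a collection of pairwise edge-disjoint monochromatic triangles with a total of m edges. (Such a colouring is obtained by taking one colour class to be a 5-cycle with one vertex replicated.) -/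
open Finset
open scoped Classical

variable {V : Type*}

/-- A monochromatic triangle packing for the 2-colouring of `K_n` given by `G` and `Gᶜ`:
pairwise edge-disjoint triangles, each monochromatic. -/
def IsMonoTrianglePacking {V : Type*} [DecidableEq V] (G : SimpleGraph V)
    (P : Finset (Finset V)) : Prop :=
  (∀ T ∈ P, G.IsNClique 3 T ∨ Gᶜ.IsNClique 3 T) ∧
    (P : Set (Finset V)).Pairwise fun S T => (S ∩ T).card ≤ 1

/-- `f(n)`: the largest `m` such that every 2-colouring of `E(K_n)` has a monochromatic
triangle packing of size `m`, i.e. the minimum over colourings of the maximum packing size. -/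
noncomputable def fMono (n : ℕ) : ℕ :=
  sInf {m | ∃ G : SimpleGraph (Fin n),
    m = sSup {k | ∃ P : Finset (Finset (Fin n)), IsMonoTrianglePacking G P ∧ k = 3 * P.card}}



lemma pigeon5 : ∀ g : Fin 5 → Bool, ∃ i j k : Fin 5, i < j ∧ j < k ∧ g i = g j ∧ g j = g k := by
  decide

lemma bool3 : ∀ x y z w : Bool, x ≠ w → y ≠ w → z ≠ w → x = y ∧ x = z := by decide

lemma ramsey6 (G : SimpleGraph (Fin 6)) :
    ∃ T : Finset (Fin 6), G.IsNClique 3 T ∨ Gᶜ.IsNClique 3 T := by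
  classical
  set f : Fin 6 → Fin 6 → Bool := fun i j => decide (G.Adj i j) with hf
  have hsymm : ∀ i j, f i j = f j i := fun i j => by
    simp only [hf, decide_eq_decide]; exact ⟨fun h => h.symm, fun h => h.symm⟩
  -- find a,b,c distinct with equal f values on all pairs
  have key : ∃ a b c : Fin 6, a ≠ b ∧ a ≠ c ∧ b ≠ c ∧ f a b = f a c ∧ f a b = f b c := by
    obtain ⟨i, j, k, hij, hjk, g1, g2⟩ := pigeon5 (fun i => f 0 i.succ)
    set b := i.succ; set c := j.succ; set d := k.succ
    have hbc : b ≠ c := fun h => hij.ne (Fin.succ_injective _ h)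
    have hbd : b ≠ d := fun h => (hij.trans hjk).ne (Fin.succ_injective _ h)
    have hcd : c ≠ d := fun h => hjk.ne (Fin.succ_injective _ h)
    have h0b : (0 : Fin 6) ≠ b := (Fin.succ_ne_zero i).symm
    have h0c : (0 : Fin 6) ≠ c := (Fin.succ_ne_zero j).symm
    have h0d : (0 : Fin 6) ≠ d := (Fin.succ_ne_zero k).symm
    by_cases h1 : f b c = f 0 b
    · exact ⟨0, b, c, h0b, h0c, hbc, g1, h1.symm⟩
    by_cases h2 : f b d = f 0 b
    · exact ⟨0, b, d, h0b, h0d, hbd, g1.trans g2, h2.symm⟩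
    by_cases h3 : f c d = f 0 c
    · exact ⟨0, c, d, h0c, h0d, hcd, g2, h3.symm⟩
    · have h3' : f c d ≠ f 0 b := fun h => h3 (h.trans g1)
      obtain ⟨e1, e2⟩ := bool3 _ _ _ _ h1 h2 h3'
      exact ⟨b, c, d, hbc, hbd, hcd, e1, e2⟩
  obtain ⟨a, b, c, hab, hac, hbc, e1, e2⟩ := key
  refine ⟨{a, b, c}, ?_⟩
  cases h : f a b with
  | true =>
    left
    rw [SimpleGraph.is3Clique_triple_iff]
    refine ⟨of_decide_eq_true h, of_decide_eq_true (e1.symm.trans h), of_decide_eq_true (e2.symm.trans h)⟩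
  | false =>
    right
    rw [SimpleGraph.is3Clique_triple_iff]
    refine ⟨⟨hab, of_decide_eq_false h⟩, ⟨hac, of_decide_eq_false (e1.symm.trans h)⟩,
      ⟨hbc, of_decide_eq_false (e2.symm.trans h)⟩⟩

def adj6 (i j : Fin 6) : Bool :=
  (min i.val j.val, max i.val j.val) ∈ [(0,1),(1,2),(2,3),(3,4),(0,4),(1,5),(4,5)]

def G6 : SimpleGraph (Fin 6) where
  Adj i j := adj6 i j = true
  symm := by constructor; intro i j h; simpa [adj6, min_comm, max_comm] using h
  loopless := by constructor; intro i; fin_cases i <;> decide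

instance : DecidableRel G6.Adj := fun _ _ => inferInstanceAs (Decidable (_ = true))

set_option maxRecDepth 10000 in
lemma G6_share : ∀ T₁ T₂ : Finset (Fin 6),
      (G6.IsNClique 3 T₁ ∨ G6ᶜ.IsNClique 3 T₁) → (G6.IsNClique 3 T₂ ∨ G6ᶜ.IsNClique 3 T₂) →
      T₁ ≠ T₂ → 2 ≤ (T₁ ∩ T₂).card := by decide

lemma mono_mem (G : SimpleGraph (Fin 6)) :
    3 ∈ {k | ∃ P : Finset (Finset (Fin 6)), IsMonoTrianglePacking G P ∧ k = 3 * P.card} := by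
  obtain ⟨T, hT⟩ := ramsey6 G
  refine ⟨{T}, ⟨?_, ?_⟩, by simp⟩
  · intro T' hT'; rw [Finset.mem_singleton] at hT'; subst hT'; exact hT
  · simp [Set.pairwise_singleton]

lemma bdd_pack (G : SimpleGraph (Fin 6)) :
    BddAbove {k | ∃ P : Finset (Finset (Fin 6)), IsMonoTrianglePacking G P ∧ k = 3 * P.card} := by
  refine ⟨3 * Fintype.card (Finset (Fin 6)), fun k hk => ?_⟩
  obtain ⟨P, _, rfl⟩ := hk
  exact Nat.mul_le_mul_left 3 (Finset.card_le_univ P)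

/-- there is a 2-colouring of `K_6` in which any two distinct monochromatic
triangles share an edge (i.e. at least two vertices); consequently `f(6) = 3`. -/
theorem stmt15 :
    (∃ G : SimpleGraph (Fin 6), ∀ T₁ T₂ : Finset (Fin 6),
      (G.IsNClique 3 T₁ ∨ Gᶜ.IsNClique 3 T₁) → (G.IsNClique 3 T₂ ∨ Gᶜ.IsNClique 3 T₂) →
      T₁ ≠ T₂ → 2 ≤ (T₁ ∩ T₂).card) ∧
    fMono 6 = 3 := by
  refine ⟨⟨G6, G6_share⟩, ?_⟩
  have hsup6 : sSup {k | ∃ P : Finset (Finset (Fin 6)),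
      IsMonoTrianglePacking G6 P ∧ k = 3 * P.card} = 3 := by
    refine le_antisymm (csSup_le ⟨3, mono_mem G6⟩ ?_) (le_csSup (bdd_pack G6) (mono_mem G6))
    rintro k ⟨P, ⟨hmono, hpair⟩, rfl⟩
    have hP1 : P.card ≤ 1 := by
      rw [Finset.card_le_one]
      intro a ha b hb
      by_contra hne
      have h1 := hpair (by exact_mod_cast ha) (by exact_mod_cast hb) hne
      have h2 := G6_share a b (hmono a ha) (hmono b hb) hne
      omega
    omega
  unfold fMono
  refine le_antisymm (Nat.sInf_le ⟨G6, hsup6.symm⟩) (le_csInf ⟨3, G6, hsup6.symm⟩ ?_)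
  rintro m ⟨G, rfl⟩
  exact le_csSup (bdd_pack G) (mono_mem G)
end
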